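/- Let p be a prime, d ≥ 2, and let H be a finite-index additive subgroup of ℤ_p^d with index [ℤ_p^d : H] = p^n. Then for every m ≥ n there exists an additive subgroup K ⊆ H with [ℤ_p^d : K] = p^m such that K and H have the same level. -/

import Mathlib

/-- The subgroup p^n·ℤ_p^d of ℤ_p^d, i.e. the range of multiplication by p^n. -/
noncomputable def pPowSubgroup (p : ℕ) [Fact p.Prime] (d n : ℕ) :
    AddSubgroup (Fin d → ℤ_[p]) :=
  (DistribMulAction.toAddMonoidHom (Fin d → ℤ_[p]) ((p : ℤ_[p]) ^ n)).range

/-- The level of an additive subgroup H of ℤ_p^d: the largest n with H ⊆ p^n·ℤ_p^d. -/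
noncomputable def level (p : ℕ) [Fact p.Prime] (d : ℕ)
    (H : AddSubgroup (Fin d → ℤ_[p])) : ℕ :=
  sSup {n : ℕ | H ≤ pPowSubgroup p d n}

section Aux

variable {p : ℕ} [Fact p.Prime]

/-- Divisibility in `ℤ_[p]` from a norm inequality. -/
lemma padic_dvd_of_norm_le {a b : ℤ_[p]} (ha : a ≠ 0) (h : ‖b‖ ≤ ‖a‖) : a ∣ b := by
  have ha' : (a : ℚ_[p]) ≠ 0 := fun h => ha (Subtype.ext h)
  have hapos : (0 : ℝ) < ‖(a : ℚ_[p])‖ := norm_pos_iff.mpr ha'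
  refine ⟨⟨(b : ℚ_[p]) / (a : ℚ_[p]), ?_⟩, ?_⟩
  · rw [norm_div]
    rw [div_le_one hapos]
    rw [← PadicInt.norm_def, ← PadicInt.norm_def]
    exact h
  · apply PadicInt.ext
    change (b : ℚ_[p]) = (a : ℚ_[p]) * ((b : ℚ_[p]) / (a : ℚ_[p]))
    rw [mul_comm]
    exact (div_mul_cancel₀ _ ha').symm

lemma mem_pPowSubgroup {d t : ℕ} {x : Fin d → ℤ_[p]} :
    x ∈ pPowSubgroup p d t ↔ ∃ z, ((p : ℤ_[p]) ^ t) • z = x := by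
  simp [pPowSubgroup, AddMonoidHom.mem_range, DistribMulAction.toAddMonoidHom_apply]

lemma pPowSubgroup_zero (d : ℕ) : pPowSubgroup p d 0 = ⊤ := by
  ext x
  simp only [AddSubgroup.mem_top, iff_true, mem_pPowSubgroup]
  exact ⟨x, by simp⟩

lemma pPowSubgroup_le {d a b : ℕ} (h : a ≤ b) :
    pPowSubgroup p d b ≤ pPowSubgroup p d a := by
  intro x hx
  obtain ⟨z, rfl⟩ := mem_pPowSubgroup.mp hx
  refine mem_pPowSubgroup.mpr ⟨(p : ℤ_[p]) ^ (b - a) • z, ?_⟩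
  rw [← mul_smul, ← pow_add, Nat.add_sub_cancel' h]

lemma level_eq {d : ℕ} (H : AddSubgroup (Fin d → ℤ_[p])) {ℓ : ℕ}
    (h1 : H ≤ pPowSubgroup p d ℓ) (h2 : ¬ H ≤ pPowSubgroup p d (ℓ + 1)) :
    level p d H = ℓ := by
  have hub : ∀ t ∈ {n : ℕ | H ≤ pPowSubgroup p d n}, t ≤ ℓ := by
    intro t ht
    by_contra hlt
    push_neg at hlt
    exact h2 (le_trans ht (pPowSubgroup_le hlt))
  apply le_antisymm
  · exact csSup_le ⟨ℓ, h1⟩ hub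
  · exact le_csSup ⟨ℓ, hub⟩ h1

lemma bddAbove_levelSet {d : ℕ} (H : AddSubgroup (Fin d → ℤ_[p]))
    {y : Fin d → ℤ_[p]} (hy : y ∈ H) (hy0 : y ≠ 0) :
    BddAbove {t : ℕ | H ≤ pPowSubgroup p d t} := by
  obtain ⟨i, hi⟩ : ∃ i, y i ≠ 0 := by
    by_contra h
    push_neg at h
    exact hy0 (funext h)
  have hpos : (0 : ℝ) < ‖y i‖ := norm_pos_iff.mpr hi
  have hp1 : ((p : ℝ))⁻¹ < 1 :=
    inv_lt_one_of_one_lt₀ (by exact_mod_cast (Fact.out : p.Prime).one_lt)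
  obtain ⟨N₀, hN₀⟩ := exists_pow_lt_of_lt_one hpos hp1
  refine ⟨N₀, fun t ht => ?_⟩
  by_contra hlt
  push_neg at hlt
  obtain ⟨z, hz⟩ := mem_pPowSubgroup.mp (ht hy)
  have hyi : y i = (p : ℤ_[p]) ^ t * z i := by
    rw [← hz]; simp
  have h1 : ‖y i‖ ≤ ((p : ℝ))⁻¹ ^ t := by
    rw [hyi, norm_mul, PadicInt.norm_p_pow]
    have : ((p : ℝ)) ^ (-(t : ℤ)) = ((p : ℝ))⁻¹ ^ t := by
      rw [zpow_neg, zpow_natCast, inv_pow]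
    rw [this]
    have := PadicInt.norm_le_one (z i)
    nlinarith [pow_nonneg (inv_nonneg.mpr (by positivity : (0:ℝ) ≤ (p:ℝ))) t]
  have h2 : ((p : ℝ))⁻¹ ^ t ≤ ((p : ℝ))⁻¹ ^ N₀ := by
    apply pow_le_pow_of_le_one (inv_nonneg.mpr (by positivity)) hp1.le hlt.le
  linarith

lemma pow_smul_mem_of_index_pow {d n : ℕ} (H : AddSubgroup (Fin d → ℤ_[p]))
    (hH : H.index = p ^ n) (z : Fin d → ℤ_[p]) : (p : ℤ_[p]) ^ n • z ∈ H := by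
  have h0 : H.index • (QuotientAddGroup.mk z : (Fin d → ℤ_[p]) ⧸ H) = 0 :=
    card_nsmul_eq_zero'
  rw [hH] at h0
  have hcast : ((p ^ n : ℕ) : ℤ_[p]) • z = (p ^ n : ℕ) • z := Nat.cast_smul_eq_nsmul _ _ _
  have : (p : ℤ_[p]) ^ n • z = (p ^ n : ℕ) • z := by
    rw [← hcast]; push_cast; ring_nf
  rw [this]
  rwa [← QuotientAddGroup.mk_nsmul, QuotientAddGroup.eq_zero_iff] at h0

lemma smul_mem_of_index_pow {d n : ℕ} (H : AddSubgroup (Fin d → ℤ_[p]))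
    (hH : H.index = p ^ n) (a : ℤ_[p]) {y : Fin d → ℤ_[p]} (hy : y ∈ H) :
    a • y ∈ H := by
  obtain ⟨b, hb⟩ : (p : ℤ_[p]) ^ n ∣ (a - (a.appr n : ℤ_[p])) := by
    have := PadicInt.appr_spec n a
    rwa [Ideal.mem_span_singleton] at this
  have ha : a = (a.appr n : ℤ_[p]) + (p : ℤ_[p]) ^ n * b := by rw [← hb]; ring
  have : a • y = (a.appr n : ℤ_[p]) • y + (p : ℤ_[p]) ^ n • (b • y) := by
    conv_lhs => rw [ha]
    rw [add_smul, mul_smul]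
  rw [this]
  refine H.add_mem ?_ (pow_smul_mem_of_index_pow H hH _)
  have : (a.appr n : ℤ_[p]) • y = (a.appr n) • y := Nat.cast_smul_eq_nsmul _ _ _
  rw [this]
  exact AddSubgroup.nsmul_mem H hy _

lemma index_span_pow (a : ℕ) :
    (Ideal.span {(p : ℤ_[p]) ^ a}).toAddSubgroup.index = p ^ a := by
  have hsurj : Function.Surjective (PadicInt.toZModPow (p := p) a) :=
    ZMod.ringHom_surjective _
  have hker : ((PadicInt.toZModPow (p := p) a : ℤ_[p] →+* ZMod (p ^ a)) :
      ℤ_[p] →+ ZMod (p ^ a)).ker = (Ideal.span {(p : ℤ_[p]) ^ a}).toAddSubgroup := by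
    ext x
    rw [AddMonoidHom.mem_ker, Submodule.mem_toAddSubgroup, ← PadicInt.ker_toZModPow,
      RingHom.mem_ker]
    rfl
  rw [← hker, AddSubgroup.index_ker]
  have : ((PadicInt.toZModPow (p := p) a : ℤ_[p] →+* ZMod (p ^ a)) :
      ℤ_[p] →+ ZMod (p ^ a)).range = ⊤ := by
    rw [AddMonoidHom.range_eq_top]
    exact hsurj
  rw [this, Nat.card_congr AddSubgroup.topEquiv.toEquiv, Nat.card_zmod]

end Aux

/-- Let p be a prime, d ≥ 2, and H a finite-index additive subgroup of ℤ_p^d of index p^n.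
Then for every m ≥ n there is an additive subgroup K ⊆ H of index p^m in ℤ_p^d with the
same level as H. -/
theorem exists_subgroup_of_index_pow_same_level
    (p : ℕ) [Fact p.Prime] (d n : ℕ) (hd : 2 ≤ d)
    (H : AddSubgroup (Fin d → ℤ_[p])) (hH : H.index = p ^ n) :
    ∀ m : ℕ, n ≤ m → ∃ K : AddSubgroup (Fin d → ℤ_[p]),
      K ≤ H ∧ K.index = p ^ m ∧ level p d K = level p d H := by
  intro m hm
  have hpp : p.Prime := Fact.out
  haveI : Nontrivial (Fin d) := ⟨⟨⟨0, by omega⟩, ⟨1, by omega⟩, by simp [Fin.ext_iff]⟩⟩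
  -- H is nontrivial
  have hHbot : H ≠ ⊥ := by
    intro hbot
    have hinf : Infinite (Fin d → ℤ_[p]) := by
      refine Infinite.of_injective (fun k : ℕ => (fun _ => (k : ℤ_[p]))) ?_
      intro a b hab
      have h2 : ((a : ℤ_[p])) = (b : ℤ_[p]) := by simpa using congrFun hab ⟨0, by omega⟩
      exact_mod_cast h2
    rw [hbot, AddSubgroup.index_bot, Nat.card_eq_zero_of_infinite] at hH
    exact (pow_ne_zero n hpp.pos.ne') hH.symm
  obtain ⟨y, hyH, hy0⟩ : ∃ y ∈ H, y ≠ 0 := by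
    by_contra h
    push_neg at h
    exact hHbot ((AddSubgroup.eq_bot_iff_forall H).mpr h)
  -- the level of H
  set S := {t : ℕ | H ≤ pPowSubgroup p d t} with hS
  have hS0 : (0 : ℕ) ∈ S := by
    simp only [hS, Set.mem_setOf_eq, pPowSubgroup_zero]
    exact le_top
  have hBdd : BddAbove S := bddAbove_levelSet H hyH hy0
  set ℓ := sSup S with hℓ
  have hℓS : ℓ ∈ S := Nat.sSup_mem ⟨0, hS0⟩ hBdd
  have hℓ1 : (ℓ + 1) ∉ S := fun h => by
    have := le_csSup hBdd h
    omega
  obtain ⟨x, hxH, hx⟩ : ∃ x ∈ H, x ∉ pPowSubgroup p d (ℓ + 1) := by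
    by_contra h
    push_neg at h
    exact hℓ1 h
  have hx0 : x ≠ 0 := fun h => hx (h ▸ (pPowSubgroup p d (ℓ + 1)).zero_mem)
  -- choose a coordinate of maximal norm
  obtain ⟨i, hi⟩ := Finite.exists_max (fun i => ‖x i‖)
  have hxi : x i ≠ 0 := by
    obtain ⟨k, hk⟩ : ∃ k, x k ≠ 0 := by
      by_contra h
      push_neg at h
      exact hx0 (funext h)
    intro h
    rw [h, norm_zero] at hi
    exact hk (norm_le_zero_iff.mp (hi k))
  obtain ⟨j, hj⟩ := exists_ne i
  obtain ⟨c, hc⟩ : x i ∣ x j := padic_dvd_of_norm_le hxi (hi j)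
  -- the linear functional g
  let g : (Fin d → ℤ_[p]) →ₗ[ℤ_[p]] ℤ_[p] :=
  { toFun := fun y => y j - c * y i
    map_add' := by intro a b; simp only [Pi.add_apply]; ring
    map_smul' := by intro a b; simp only [Pi.smul_apply, smul_eq_mul, RingHom.id_apply]; ring }
  have hgx : g x = 0 := by
    show x j - c * x i = 0
    rw [hc]; ring
  -- H as a submodule and its image ideal
  let H' : Submodule ℤ_[p] (Fin d → ℤ_[p]) :=
  { carrier := H
    add_mem' := fun ha hb => H.add_mem ha hb
    zero_mem' := H.zero_mem
    smul_mem' := fun a y hy => smul_mem_of_index_pow H hH a hy }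
  let J : Ideal ℤ_[p] := Submodule.map g H'
  have hJne : J ≠ ⊥ := by
    intro hJ
    have hmem : (p : ℤ_[p]) ^ n • (Pi.single j 1 : Fin d → ℤ_[p]) ∈ H :=
      pow_smul_mem_of_index_pow H hH _
    have : g ((p : ℤ_[p]) ^ n • (Pi.single j 1 : Fin d → ℤ_[p])) ∈ J :=
      Submodule.mem_map_of_mem hmem
    rw [hJ, Submodule.mem_bot, map_smul] at this
    have hg1 : g (Pi.single j 1 : Fin d → ℤ_[p]) = 1 := by
      show (Pi.single j 1 : Fin d → ℤ_[p]) j - c * (Pi.single j 1 : Fin d → ℤ_[p]) i = 1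
      rw [Pi.single_eq_same, Pi.single_eq_of_ne (Ne.symm hj)]
      ring
    rw [hg1, smul_eq_mul, mul_one] at this
    exact (pow_ne_zero n (PadicInt.prime_p.ne_zero)) this
  obtain ⟨k, hk⟩ := IsDiscreteValuationRing.ideal_eq_span_pow_irreducible hJne
    PadicInt.irreducible_p
  -- the subgroup K
  set T : Ideal ℤ_[p] := Ideal.span {(p : ℤ_[p]) ^ (k + (m - n))} with hT
  have hTJ : T ≤ J := by
    rw [hk, hT]
    exact Ideal.span_singleton_le_span_singleton.mpr
      (pow_dvd_pow _ (Nat.le_add_right _ _))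
  set gA : (Fin d → ℤ_[p]) →+ ℤ_[p] := g.toAddMonoidHom with hgA
  set K : AddSubgroup (Fin d → ℤ_[p]) :=
    H ⊓ AddSubgroup.comap gA T.toAddSubgroup with hKdef
  have hKH : K ≤ H := inf_le_left
  have hxK : x ∈ K := by
    refine ⟨hxH, ?_⟩
    show g x ∈ T.toAddSubgroup
    rw [hgx]
    exact zero_mem _
  -- index computation
  have hmapgH : AddSubgroup.map gA H = J.toAddSubgroup := by
    ext z
    constructor
    · rintro ⟨w, hw, rfl⟩
      exact Submodule.mem_map_of_mem hw
    · rintro ⟨w, hw, rfl⟩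
      exact ⟨w, hw, rfl⟩
  have hTindex : T.toAddSubgroup.index = p ^ (k + (m - n)) := index_span_pow _
  have hJindex : J.toAddSubgroup.index = p ^ k := by
    rw [hk]; exact index_span_pow _
  have hTJ' : T.toAddSubgroup ≤ J.toAddSubgroup := hTJ
  have hrelTJ : T.toAddSubgroup.relIndex J.toAddSubgroup = p ^ (m - n) := by
    have h1 := AddSubgroup.relIndex_mul_index hTJ'
    rw [hTindex, hJindex] at h1
    have h2 : T.toAddSubgroup.relIndex J.toAddSubgroup * p ^ k
        = p ^ (m - n) * p ^ k := by
      rw [h1, ← pow_add, Nat.add_comm]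
    exact Nat.eq_of_mul_eq_mul_right (pow_pos hpp.pos k) h2
  have hrelKH : K.relIndex H = p ^ (m - n) := by
    rw [hKdef, AddSubgroup.inf_relIndex_left, AddSubgroup.relIndex_comap, hmapgH]
    exact hrelTJ
  have hKindex : K.index = p ^ m := by
    have := AddSubgroup.relIndex_mul_index hKH
    rw [hrelKH, hH, ← pow_add, Nat.sub_add_cancel hm] at this
    exact this.symm
  -- level computation
  have hlevelH : level p d H = ℓ := level_eq H hℓS hℓ1
  have hlevelK : level p d K = ℓ := by
    refine level_eq K (le_trans hKH hℓS) ?_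
    intro hle
    exact hx (hle hxK)
  exact ⟨K, hKH, hKindex, by rw [hlevelH, hlevelK]⟩
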